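/- The bilinear form Γ is weakly coercive: there exists a constant C > 0 (depending only on K, ω₀ and r) such that for every l : ℝ × {−ω₀, ω₀} → ℝ, 2π-periodic and smooth in θ, odd (l(−θ, −ω) = −l(θ, ω)), with ∫₀^{2π} l(θ, ω) dθ = 0 for each ω, there exists a 2π-periodic continuous odd h : ℝ × {−ω₀, ω₀} → ℝ with (1/2)·Σ_{ω}∫₀^{2π} h(θ, ω)² dθ ≤ C²·‖l‖²_{μ,−1,q} and Γ(h, l) = ‖l‖²_{μ,−1,q}, where ‖l‖²_{μ,−1,q} = (1/2)·Σ_{ω}∫₀^{2π} 𝓛(θ, ω)²/q(θ, ω) dθ. -/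

import Mathlib

noncomputable section

open MeasureTheory

/-- `G u ω x = x·cos u + 2ωu`. -/
def G (u ω x : ℝ) : ℝ := x * Real.cos u + 2 * ω * u

/-- The unnormalized stationary profile `S(θ, ω, x)`. -/
def S (θ ω x : ℝ) : ℝ :=
  Real.exp (G θ ω x) *
    ((1 - Real.exp (4 * Real.pi * ω)) * (∫ u in (0:ℝ)..θ, Real.exp (-(G u ω x))) +
      Real.exp (4 * Real.pi * ω) * (∫ u in (0:ℝ)..(2 * Real.pi), Real.exp (-(G u ω x))))

/-- The normalization constant `Z(ω, x)`. -/
def Z (ω x : ℝ) : ℝ := ∫ θ in (0:ℝ)..(2 * Real.pi), S θ ω x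

/-- `Ψ_μ` for the binary disorder law `μ = (1/2)(δ_{-ω₀} + δ_{ω₀})`. -/
def psiMu (ω₀ x : ℝ) : ℝ :=
  (1 / 2) * ((∫ θ in (0:ℝ)..(2 * Real.pi), Real.cos θ * S θ (-ω₀) x) / Z (-ω₀) x +
    (∫ θ in (0:ℝ)..(2 * Real.pi), Real.cos θ * S θ ω₀ x) / Z ω₀ x)

/-- The stationary density `q(θ, ω) = S(θ, ω, 2Kr)/Z(ω, 2Kr)`. -/
def q (K r θ ω : ℝ) : ℝ := S θ ω (2 * K * r) / Z ω (2 * K * r)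

/-- `κ(ω) = (1 − exp(4πω))/(2 Z(ω, 2Kr))`. -/
def kap (K r ω : ℝ) : ℝ := (1 - Real.exp (4 * Real.pi * ω)) / (2 * Z ω (2 * K * r))

/-- The averaged convolution `⟨J∗h⟩_μ(θ)` for binary disorder. -/
def Jconv (K ω₀ : ℝ) (h : ℝ → ℝ → ℝ) (θ : ℝ) : ℝ :=
  -(K / 2) * ((∫ φ in (0:ℝ)..(2 * Real.pi), Real.sin φ * h (θ - φ) (-ω₀)) +
    (∫ φ in (0:ℝ)..(2 * Real.pi), Real.sin φ * h (θ - φ) ω₀))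

/-- The linearized evolution operator `L` around the stationary density `q`. -/
def Lop (K ω₀ r : ℝ) (h : ℝ → ℝ → ℝ) (θ ω : ℝ) : ℝ :=
  (1 / 2) * deriv (deriv (fun u => h u ω)) θ -
    deriv (fun u => h u ω * (Jconv K ω₀ (q K r) u + ω) + q K r u ω * Jconv K ω₀ h u) θ

/-- The `2π`-periodic primitive of a zero-mean function `a`, normalized so that its
integral against `1/k` over a period vanishes. -/
def prim (k a : ℝ → ℝ) (θ : ℝ) : ℝ :=
  (∫ u in (0:ℝ)..θ, a u) -
    (∫ s in (0:ℝ)..(2 * Real.pi), (∫ u in (0:ℝ)..s, a u) / k s) /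
      (∫ s in (0:ℝ)..(2 * Real.pi), 1 / k s)

/-- The bilinear form appearing in the decomposition of the Dirichlet form. -/
def Gam (K r ω₀ : ℝ) (h l : ℝ → ℝ → ℝ) : ℝ :=
  -(1 / 2) * ((1 / 2) *
      ((∫ θ in (0:ℝ)..(2 * Real.pi), h θ (-ω₀) * l θ (-ω₀) / q K r θ (-ω₀)) +
        (∫ θ in (0:ℝ)..(2 * Real.pi), h θ ω₀ * l θ ω₀ / q K r θ ω₀))) +
    (1 / 2) *
      ((∫ θ in (0:ℝ)..(2 * Real.pi),
          kap K r (-ω₀) * h θ (-ω₀) *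
            prim (fun u => q K r u (-ω₀)) (fun u => l u (-ω₀)) θ / (q K r θ (-ω₀)) ^ 2) +
        (∫ θ in (0:ℝ)..(2 * Real.pi),
          kap K r ω₀ * h θ ω₀ *
            prim (fun u => q K r u ω₀) (fun u => l u ω₀) θ / (q K r θ ω₀) ^ 2))

/-- The squared weighted negative Sobolev norm of a zero-mean function. -/
def normMuSq (K r ω₀ : ℝ) (l : ℝ → ℝ → ℝ) : ℝ :=
  (1 / 2) *
    ((∫ θ in (0:ℝ)..(2 * Real.pi),
        (prim (fun u => q K r u (-ω₀)) (fun u => l u (-ω₀)) θ) ^ 2 / q K r θ (-ω₀)) +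
      (∫ θ in (0:ℝ)..(2 * Real.pi),
        (prim (fun u => q K r u ω₀) (fun u => l u ω₀) θ) ^ 2 / q K r θ ω₀))

section AuxCoercive
set_option maxHeartbeats 2000000
open intervalIntegral Real

lemma expG_cont (ω x : ℝ) : Continuous fun u => Real.exp (-(G u ω x)) := by
  unfold G; fun_prop

lemma expG_intble (ω x a b : ℝ) :
    IntervalIntegrable (fun u => Real.exp (-(G u ω x))) volume a b :=
  (expG_cont ω x).intervalIntegrable a b

lemma G_shift (u ω x : ℝ) : G (u + 2 * Real.pi) ω x = G u ω x + 4 * Real.pi * ω := by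
  unfold G; rw [Real.cos_add_two_pi]; ring

lemma expG_shift (u ω x : ℝ) :
    Real.exp (-(G (u + 2 * Real.pi) ω x)) =
      Real.exp (-(4 * Real.pi * ω)) * Real.exp (-(G u ω x)) := by
  rw [G_shift, ← Real.exp_add]; ring_nf

lemma intExpG_shift (θ ω x : ℝ) :
    (∫ u in (0:ℝ)..(θ + 2 * Real.pi), Real.exp (-(G u ω x))) =
      (∫ u in (0:ℝ)..(2 * Real.pi), Real.exp (-(G u ω x))) +
        Real.exp (-(4 * Real.pi * ω)) * ∫ u in (0:ℝ)..θ, Real.exp (-(G u ω x)) := by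
  rw [← integral_add_adjacent_intervals (expG_intble ω x 0 (2 * Real.pi))
    (expG_intble ω x (2 * Real.pi) (θ + 2 * Real.pi))]
  congr 1
  have h1 : (∫ u in (2 * Real.pi : ℝ)..(θ + 2 * Real.pi), Real.exp (-(G u ω x))) =
      ∫ u in (0:ℝ)..θ, Real.exp (-(G (u + 2 * Real.pi) ω x)) := by
    rw [integral_comp_add_right (fun u => Real.exp (-(G u ω x))) (2 * Real.pi)]
    norm_num
  rw [h1]
  simp_rw [expG_shift]
  rw [intervalIntegral.integral_const_mul]

lemma S_periodic (ω x : ℝ) : Function.Periodic (fun θ => S θ ω x) (2 * Real.pi) := by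
  intro θ
  simp only [S]
  rw [intExpG_shift, G_shift, Real.exp_add]
  have h := Real.exp_ne_zero (4 * Real.pi * ω)
  rw [Real.exp_neg]
  field_simp
  ring

lemma G_neg (u ω x : ℝ) : G (-u) (-ω) x = G u ω x := by
  unfold G; rw [Real.cos_neg]; ring

lemma intExpG_neg (θ ω x : ℝ) :
    (∫ u in (0:ℝ)..(-θ), Real.exp (-(G u (-ω) x))) =
      -∫ u in (0:ℝ)..θ, Real.exp (-(G u ω x)) := by
  have h : ∀ u : ℝ, Real.exp (-(G u (-ω) x)) = Real.exp (-(G (-u) ω x)) := by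
    intro u
    have h2 := G_neg (-u) ω x
    rw [neg_neg] at h2
    rw [h2]
  simp_rw [h]
  rw [integral_comp_neg (fun u => Real.exp (-(G u ω x))), integral_symm]
  norm_num

lemma intExpG_2pi_neg (ω x : ℝ) :
    (∫ u in (0:ℝ)..(2 * Real.pi), Real.exp (-(G u (-ω) x))) =
      Real.exp (4 * Real.pi * ω) * ∫ u in (0:ℝ)..(2 * Real.pi), Real.exp (-(G u ω x)) := by
  set A := ∫ u in (0:ℝ)..(2 * Real.pi), Real.exp (-(G u ω x)) with hA
  set Bm := ∫ u in (0:ℝ)..(-(2 * Real.pi)), Real.exp (-(G u ω x)) with hBm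
  have hshift := intExpG_shift (-(2 * Real.pi)) ω x
  rw [neg_add_cancel, integral_same] at hshift
  have hneg := intExpG_neg (-(2 * Real.pi)) ω x
  rw [neg_neg] at hneg
  rw [hneg]
  have hEF : Real.exp (4 * Real.pi * ω) * Real.exp (-(4 * Real.pi * ω)) = 1 := by
    rw [← Real.exp_add]; ring_nf; exact Real.exp_zero
  linear_combination Real.exp (4 * Real.pi * ω) * hshift + Bm * hEF

lemma S_neg (θ ω x : ℝ) :
    S (-θ) (-ω) x = Real.exp (-(4 * Real.pi * ω)) * S θ ω x := by
  simp only [S, G_neg]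
  rw [intExpG_neg, intExpG_2pi_neg]
  have h4 : 4 * Real.pi * -ω = -(4 * Real.pi * ω) := by ring
  rw [h4]
  have hne := Real.exp_ne_zero (4 * Real.pi * ω)
  rw [Real.exp_neg]
  field_simp
  ring

lemma Z_neg (ω x : ℝ) : Z (-ω) x = Real.exp (-(4 * Real.pi * ω)) * Z ω x := by
  unfold Z
  have h : ∀ θ : ℝ, S θ (-ω) x = Real.exp (-(4 * Real.pi * ω)) * S (-θ) ω x := by
    intro θ
    have h2 := S_neg (-θ) ω x
    rw [neg_neg] at h2
    exact h2
  simp_rw [h]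
  rw [intervalIntegral.integral_const_mul]
  congr 1
  have hper := (S_periodic ω x).intervalIntegral_add_eq (-(2 * Real.pi)) 0
  rw [neg_add_cancel, zero_add] at hper
  rw [integral_comp_neg (fun θ => S θ ω x), neg_zero]
  exact hper

lemma S_cont (ω x : ℝ) : Continuous fun θ => S θ ω x := by
  unfold S
  apply Continuous.mul
  · apply Real.continuous_exp.comp; unfold G; fun_prop
  · apply Continuous.add
    · exact (continuous_const.mul
        (intervalIntegral.continuous_primitive (fun a b => expG_intble ω x a b) 0))
    · exact continuous_const
  
lemma S_pos {θ : ℝ} (hθ : θ ∈ Set.Icc (0:ℝ) (2 * Real.pi)) (ω x : ℝ) : 0 < S θ ω x := by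
  obtain ⟨h0, h2⟩ := hθ
  unfold S
  apply mul_pos (Real.exp_pos _)
  have hsplit : (∫ u in (0:ℝ)..(2 * Real.pi), Real.exp (-(G u ω x))) =
      (∫ u in (0:ℝ)..θ, Real.exp (-(G u ω x))) +
        ∫ u in θ..(2 * Real.pi), Real.exp (-(G u ω x)) :=
    (integral_add_adjacent_intervals (expG_intble ω x 0 θ) (expG_intble ω x θ (2 * Real.pi))).symm
  rw [hsplit]
  have hIθ : 0 ≤ ∫ u in (0:ℝ)..θ, Real.exp (-(G u ω x)) :=
    intervalIntegral.integral_nonneg h0 (fun u _ => (Real.exp_pos _).le)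
  have hJ : 0 ≤ ∫ u in θ..(2 * Real.pi), Real.exp (-(G u ω x)) :=
    intervalIntegral.integral_nonneg h2 (fun u _ => (Real.exp_pos _).le)
  have hE : (0:ℝ) < Real.exp (4 * Real.pi * ω) := Real.exp_pos _
  have key : 0 < (∫ u in (0:ℝ)..θ, Real.exp (-(G u ω x))) +
      Real.exp (4 * Real.pi * ω) * ∫ u in θ..(2 * Real.pi), Real.exp (-(G u ω x)) := by
    rcases eq_or_lt_of_le h0 with h | h
    · have h2' : θ < 2 * Real.pi := by
        rw [← h]; positivity
      have : 0 < ∫ u in θ..(2 * Real.pi), Real.exp (-(G u ω x)) :=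
        intervalIntegral.intervalIntegral_pos_of_pos_on (expG_intble ω x θ (2 * Real.pi))
          (fun u _ => Real.exp_pos _) h2'
      nlinarith
    · have : 0 < ∫ u in (0:ℝ)..θ, Real.exp (-(G u ω x)) :=
        intervalIntegral.intervalIntegral_pos_of_pos_on (expG_intble ω x 0 θ)
          (fun u _ => Real.exp_pos _) h
      nlinarith
  nlinarith
  
lemma Z_pos (ω x : ℝ) : 0 < Z ω x := by
  unfold Z
  apply intervalIntegral.intervalIntegral_pos_of_pos_on
    ((S_cont ω x).intervalIntegrable 0 (2 * Real.pi))
  · exact fun u hu => S_pos ⟨hu.1.le, hu.2.le⟩ ω x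
  · positivity

lemma q_pos {θ : ℝ} (hθ : θ ∈ Set.Icc (0:ℝ) (2 * Real.pi)) (K r ω : ℝ) : 0 < q K r θ ω :=
  div_pos (S_pos hθ ω _) (Z_pos ω _)

lemma q_cont (K r ω : ℝ) : Continuous fun θ => q K r θ ω := (S_cont ω _).div_const _

lemma q_periodic (K r ω : ℝ) : Function.Periodic (fun θ => q K r θ ω) (2 * Real.pi) :=
  fun θ => by simp only [q]; rw [show S (θ + 2 * Real.pi) ω (2*K*r) = S θ ω (2*K*r) from S_periodic ω _ θ]

lemma q_neg (K r θ ω : ℝ) : q K r (-θ) (-ω) = q K r θ ω := by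
  unfold q
  rw [S_neg, Z_neg, mul_div_mul_left _ _ (Real.exp_ne_zero _)]

lemma kap_neg (K r ω : ℝ) : kap K r (-ω) = -kap K r ω := by
  unfold kap
  rw [Z_neg]
  have h4 : 4 * Real.pi * -ω = -(4 * Real.pi * ω) := by ring
  rw [h4]
  rw [Real.exp_neg]
  have hne := Real.exp_ne_zero (4 * Real.pi * ω)
  have hZ := (Z_pos ω (2 * K * r)).ne'
  field_simp
  ring

lemma kap_ne (K r : ℝ) {ω : ℝ} (hω : ω ≠ 0) : kap K r ω ≠ 0 := by
  unfold kap
  apply div_ne_zero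
  · rw [sub_ne_zero]
    intro h
    have := Real.exp_eq_one_iff (4 * Real.pi * ω)
    rw [← h] at this
    have h0 : 4 * Real.pi * ω = 0 := this.mp rfl
    have := Real.pi_ne_zero
    rcases mul_eq_zero.mp h0 with h1 | h1
    · rcases mul_eq_zero.mp h1 with h2 | h2 <;> simp_all
    · exact hω h1
  · exact mul_ne_zero two_ne_zero (Z_pos ω _).ne'

end AuxCoercive

set_option maxHeartbeats 2000000 in
open intervalIntegral Real in
/-- Weak coercivity of the bilinear form: some uniform constant works for every
admissible odd zero-mean `l`. -/
theorem stmt10 (K ω₀ r : ℝ) (hK : 0 < K) (hω₀ : 0 < ω₀) (hr : 0 < r)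
    (hfix : r = psiMu ω₀ (2 * K * r)) :
    ∃ C : ℝ, 0 < C ∧
      ∀ l : ℝ → ℝ → ℝ,
        (∀ ω ∈ ({-ω₀, ω₀} : Set ℝ), Function.Periodic (fun θ => l θ ω) (2 * Real.pi)) →
        (∀ ω ∈ ({-ω₀, ω₀} : Set ℝ), ContDiff ℝ (⊤ : ℕ∞) (fun θ => l θ ω)) →
        (∀ θ : ℝ, ∀ ω ∈ ({-ω₀, ω₀} : Set ℝ), l (-θ) (-ω) = -l θ ω) →
        (∀ ω ∈ ({-ω₀, ω₀} : Set ℝ), (∫ θ in (0:ℝ)..(2 * Real.pi), l θ ω) = 0) →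
        ∃ h : ℝ → ℝ → ℝ,
          (∀ ω ∈ ({-ω₀, ω₀} : Set ℝ),
            Function.Periodic (fun θ => h θ ω) (2 * Real.pi) ∧
              Continuous (fun θ => h θ ω)) ∧
          (∀ θ : ℝ, ∀ ω ∈ ({-ω₀, ω₀} : Set ℝ), h (-θ) (-ω) = -h θ ω) ∧
          (1 / 2) * ((∫ θ in (0:ℝ)..(2 * Real.pi), (h θ (-ω₀)) ^ 2) +
              (∫ θ in (0:ℝ)..(2 * Real.pi), (h θ ω₀) ^ 2)) ≤ C ^ 2 * normMuSq K r ω₀ l ∧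
          Gam K r ω₀ h l = normMuSq K r ω₀ l := by
    classical
  have hm1 : (-ω₀) ∈ ({-ω₀, ω₀} : Set ℝ) := Set.mem_insert _ _
  have hm2 : ω₀ ∈ ({-ω₀, ω₀} : Set ℝ) := Set.mem_insert_iff.mpr (Or.inr rfl)
  have hnegmem : ∀ ω ∈ ({-ω₀, ω₀} : Set ℝ), -ω ∈ ({-ω₀, ω₀} : Set ℝ) := by
    intro ω hω
    simp only [Set.mem_insert_iff, Set.mem_singleton_iff] at hω ⊢
    rcases hω with rfl | rfl
    · right; rw [neg_neg]
    · left; rfl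
  have hne0 : ∀ ω ∈ ({-ω₀, ω₀} : Set ℝ), ω ≠ 0 := by
    intro ω hω
    simp only [Set.mem_insert_iff, Set.mem_singleton_iff] at hω
    rcases hω with rfl | rfl
    · exact neg_ne_zero.mpr hω₀.ne'
    · exact hω₀.ne'
  have hkne : ∀ ω ∈ ({-ω₀, ω₀} : Set ℝ), kap K r ω ≠ 0 := fun ω hω => kap_ne K r (hne0 ω hω)
  have hIcc : Set.uIcc (0:ℝ) (2 * Real.pi) = Set.Icc (0:ℝ) (2 * Real.pi) :=
    Set.uIcc_of_le (by positivity)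
  have hbound : ∀ ω ∈ ({-ω₀, ω₀} : Set ℝ), ∃ B0 : ℝ, ∀ θ ∈ Set.Icc (0:ℝ) (2 * Real.pi),
      (q K r θ ω) ^ 3 ≤ B0 * (kap K r ω) ^ 2 := by
    intro ω hω
    obtain ⟨M, hM⟩ := (isCompact_Icc (a := (0:ℝ)) (b := 2 * Real.pi)).exists_bound_of_continuousOn
      (q_cont K r ω).continuousOn
    refine ⟨M ^ 3 / (kap K r ω) ^ 2, ?_⟩
    intro θ hθ
    have hk2 : 0 < (kap K r ω) ^ 2 :=
      lt_of_le_of_ne (sq_nonneg _) (Ne.symm (pow_ne_zero 2 (hkne ω hω)))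
    have hq := q_pos hθ K r ω
    have hqM : q K r θ ω ≤ M := (le_abs_self _).trans (Real.norm_eq_abs _ ▸ hM θ hθ)
    have h3 : (q K r θ ω) ^ 3 ≤ M ^ 3 := pow_le_pow_left₀ hq.le hqM 3
    have hc : M ^ 3 / (kap K r ω) ^ 2 * (kap K r ω) ^ 2 = M ^ 3 :=
      div_mul_cancel₀ _ (ne_of_gt hk2)
    linarith
  obtain ⟨B₁, hB₁⟩ := hbound (-ω₀) hm1
  obtain ⟨B₂, hB₂⟩ := hbound ω₀ hm2
  set B := max 1 (max B₁ B₂) with hBdef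
  have hB1 : (1:ℝ) ≤ B := le_max_left _ _
  have hq3 : ∀ ω ∈ ({-ω₀, ω₀} : Set ℝ), ∀ θ ∈ Set.Icc (0:ℝ) (2 * Real.pi),
      (q K r θ ω) ^ 3 ≤ B * (kap K r ω) ^ 2 := by
    intro ω hω θ hθ
    have hk2 : (0:ℝ) ≤ (kap K r ω) ^ 2 := sq_nonneg _
    simp only [Set.mem_insert_iff, Set.mem_singleton_iff] at hω
    rcases hω with rfl | rfl
    · exact le_trans (hB₁ θ hθ)
        (mul_le_mul_of_nonneg_right ((le_max_left B₁ B₂).trans (le_max_right 1 _)) hk2)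
    · exact le_trans (hB₂ θ hθ)
        (mul_le_mul_of_nonneg_right ((le_max_right B₁ B₂).trans (le_max_right 1 _)) hk2)
  have hC2 : Real.sqrt B ^ 2 = B := Real.sq_sqrt (by linarith)
  refine ⟨Real.sqrt B, Real.sqrt_pos.mpr (by linarith), ?_⟩
  intro l hper hsm hodd hzero
  have hco : ∀ ω ∈ ({-ω₀, ω₀} : Set ℝ), Continuous fun θ => l θ ω :=
    fun ω hω => (hsm ω hω).continuous
  have hPc : ∀ ω ∈ ({-ω₀, ω₀} : Set ℝ), Continuous fun t => ∫ u in (0:ℝ)..t, l u ω :=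
    fun ω hω => intervalIntegral.continuous_primitive
      (fun a b => (hco ω hω).intervalIntegrable a b) 0
  have hPper : ∀ ω ∈ ({-ω₀, ω₀} : Set ℝ), ∀ t : ℝ,
      (∫ u in (0:ℝ)..(t + 2 * Real.pi), l u ω) = ∫ u in (0:ℝ)..t, l u ω := by
    intro ω hω t
    rw [(hper ω hω).intervalIntegral_add_eq_add 0 t
      (fun a b => (hco ω hω).intervalIntegrable a b), zero_add, hzero ω hω, add_zero]
  have hprimc : ∀ ω ∈ ({-ω₀, ω₀} : Set ℝ),
      Continuous fun θ => prim (fun u => q K r u ω) (fun u => l u ω) θ := by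
    intro ω hω
    simp only [prim]
    exact (hPc ω hω).sub continuous_const
  have hprimper : ∀ ω ∈ ({-ω₀, ω₀} : Set ℝ), ∀ θ : ℝ,
      prim (fun u => q K r u ω) (fun u => l u ω) (θ + 2 * Real.pi) =
        prim (fun u => q K r u ω) (fun u => l u ω) θ := by
    intro ω hω θ
    simp only [prim]
    rw [hPper ω hω θ]
  have hpl : ∀ ω ∈ ({-ω₀, ω₀} : Set ℝ),
      (∫ θ in (0:ℝ)..(2 * Real.pi),
        prim (fun u => q K r u ω) (fun u => l u ω) θ * l θ ω) = 0 := by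
    intro ω hω
    simp only [prim]
    set c := (∫ s in (0:ℝ)..(2 * Real.pi), (∫ u in (0:ℝ)..s, l u ω) / q K r s ω) /
      (∫ s in (0:ℝ)..(2 * Real.pi), 1 / q K r s ω) with hc
    have hd : ∀ t ∈ Set.uIcc (0:ℝ) (2 * Real.pi),
        HasDerivAt (fun y => ((∫ u in (0:ℝ)..y, l u ω) - c) *
            ((∫ u in (0:ℝ)..y, l u ω) - c) / 2)
          (((∫ u in (0:ℝ)..t, l u ω) - c) * l t ω) t := by
      intro t _
      have h1 : HasDerivAt (fun y => (∫ u in (0:ℝ)..y, l u ω) - c) (l t ω) t :=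
        (((hco ω hω).integral_hasStrictDerivAt 0 t).hasDerivAt).sub_const c
      have h2 := (h1.fun_mul h1).div_const 2
      refine h2.congr_deriv ?_
      ring
    have hint : IntervalIntegrable
        (fun t => ((∫ u in (0:ℝ)..t, l u ω) - c) * l t ω) volume 0 (2 * Real.pi) :=
      (((hPc ω hω).sub continuous_const).mul (hco ω hω)).intervalIntegrable _ _
    rw [intervalIntegral.integral_eq_sub_of_hasDerivAt hd hint]
    simp only [hzero ω hω, intervalIntegral.integral_same]
    ring
  have hprimeven : ∀ ω ∈ ({-ω₀, ω₀} : Set ℝ), ∀ θ : ℝ,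
      prim (fun u => q K r u (-ω)) (fun u => l u (-ω)) (-θ) =
        prim (fun u => q K r u ω) (fun u => l u ω) θ := by
    intro ω hω θ
    have hPneg : ∀ t : ℝ, (∫ u in (0:ℝ)..t, l u (-ω)) = ∫ u in (0:ℝ)..(-t), l u ω := by
      intro t
      have hlo : ∀ u : ℝ, l u (-ω) = -l (-u) ω := by
        intro u
        have h := hodd (-u) ω hω
        rw [neg_neg] at h
        exact h
      simp_rw [hlo]
      rw [intervalIntegral.integral_comp_neg (fun u => -l u ω), neg_zero,
        intervalIntegral.integral_symm, intervalIntegral.integral_neg, neg_neg]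
    have hqneg : ∀ s : ℝ, q K r s (-ω) = q K r (-s) ω := by
      intro s
      have h := q_neg K r (-s) ω
      rw [neg_neg] at h
      exact h
    simp only [prim]
    rw [hPneg (-θ), neg_neg]
    congr 2
    · simp_rw [hPneg, hqneg]
      have hgper : Function.Periodic
          (fun t => (∫ u in (0:ℝ)..t, l u ω) / q K r t ω) (2 * Real.pi) := by
        intro t
        simp only
        rw [hPper ω hω t, show q K r (t + 2 * Real.pi) ω = q K r t ω from q_periodic K r ω t]
      rw [intervalIntegral.integral_comp_neg
        (fun t => (∫ u in (0:ℝ)..t, l u ω) / q K r t ω), neg_zero]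
      have h := hgper.intervalIntegral_add_eq (-(2 * Real.pi)) 0
      rw [neg_add_cancel, zero_add] at h
      exact h
    · simp_rw [hqneg]
      have hgper : Function.Periodic (fun t => 1 / q K r t ω) (2 * Real.pi) := by
        intro t
        simp only
        rw [show q K r (t + 2 * Real.pi) ω = q K r t ω from q_periodic K r ω t]
      rw [intervalIntegral.integral_comp_neg (fun t => 1 / q K r t ω), neg_zero]
      have h := hgper.intervalIntegral_add_eq (-(2 * Real.pi)) 0
      rw [neg_add_cancel, zero_add] at h
      exact h
  refine ⟨fun θ ω => prim (fun u => q K r u ω) (fun u => l u ω) θ * q K r θ ω / kap K r ω,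
    ?_, ?_, ?_, ?_⟩
  · intro ω hω
    constructor
    · intro θ
      simp only
      rw [hprimper ω hω θ,
        show q K r (θ + 2 * Real.pi) ω = q K r θ ω from q_periodic K r ω θ]
    · exact ((hprimc ω hω).mul (q_cont K r ω)).div_const _
  · intro θ ω hω
    simp only
    rw [hprimeven ω hω θ, q_neg, kap_neg, div_neg]
  · -- norm bound
    have key : ∀ ω ∈ ({-ω₀, ω₀} : Set ℝ),
        (∫ θ in (0:ℝ)..(2 * Real.pi),
          (prim (fun u => q K r u ω) (fun u => l u ω) θ * q K r θ ω / kap K r ω) ^ 2) ≤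
          B * ∫ θ in (0:ℝ)..(2 * Real.pi),
            (prim (fun u => q K r u ω) (fun u => l u ω) θ) ^ 2 / q K r θ ω := by
      intro ω hω
      have hint1 : IntervalIntegrable
          (fun θ => (prim (fun u => q K r u ω) (fun u => l u ω) θ * q K r θ ω / kap K r ω) ^ 2)
          volume 0 (2 * Real.pi) :=
        ((((hprimc ω hω).mul (q_cont K r ω)).div_const _).pow 2).intervalIntegrable _ _
      have hint2 : IntervalIntegrable
          (fun θ => B * ((prim (fun u => q K r u ω) (fun u => l u ω) θ) ^ 2 / q K r θ ω))
          volume 0 (2 * Real.pi) := by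
        apply ContinuousOn.intervalIntegrable
        rw [hIcc]
        apply ContinuousOn.mul continuousOn_const
        apply ContinuousOn.div ((hprimc ω hω).pow 2).continuousOn (q_cont K r ω).continuousOn
        intro θ hθ
        exact (q_pos hθ K r ω).ne'
      have hle : (∫ θ in (0:ℝ)..(2 * Real.pi),
            (prim (fun u => q K r u ω) (fun u => l u ω) θ * q K r θ ω / kap K r ω) ^ 2) ≤
          ∫ θ in (0:ℝ)..(2 * Real.pi),
            B * ((prim (fun u => q K r u ω) (fun u => l u ω) θ) ^ 2 / q K r θ ω) := by
        apply intervalIntegral.integral_mono_on (by positivity) hint1 hint2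
        intro θ hθ
        have hq := q_pos hθ K r ω
        have hk2 : 0 < (kap K r ω) ^ 2 :=
          lt_of_le_of_ne (sq_nonneg _) (Ne.symm (pow_ne_zero 2 (hkne ω hω)))
        have h3 := hq3 ω hω θ hθ
        rw [div_pow, mul_div_assoc', div_le_div_iff₀ hk2 hq]
        nlinarith [mul_le_mul_of_nonneg_left h3
          (sq_nonneg (prim (fun u => q K r u ω) (fun u => l u ω) θ))]
      calc (∫ θ in (0:ℝ)..(2 * Real.pi),
            (prim (fun u => q K r u ω) (fun u => l u ω) θ * q K r θ ω / kap K r ω) ^ 2) ≤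
          ∫ θ in (0:ℝ)..(2 * Real.pi),
            B * ((prim (fun u => q K r u ω) (fun u => l u ω) θ) ^ 2 / q K r θ ω) := hle
        _ = B * ∫ θ in (0:ℝ)..(2 * Real.pi),
            (prim (fun u => q K r u ω) (fun u => l u ω) θ) ^ 2 / q K r θ ω :=
          intervalIntegral.integral_const_mul _ _
    have k1 := key (-ω₀) hm1
    have k2 := key ω₀ hm2
    rw [hC2]
    simp only [normMuSq]
    linarith
  · -- Gamma identity
    have hzero1 : ∀ ω ∈ ({-ω₀, ω₀} : Set ℝ),
        (∫ θ in (0:ℝ)..(2 * Real.pi),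
          prim (fun u => q K r u ω) (fun u => l u ω) θ * q K r θ ω / kap K r ω * l θ ω /
            q K r θ ω) = 0 := by
      intro ω hω
      have hEq : Set.EqOn
          (fun θ => prim (fun u => q K r u ω) (fun u => l u ω) θ * q K r θ ω / kap K r ω *
            l θ ω / q K r θ ω)
          (fun θ => prim (fun u => q K r u ω) (fun u => l u ω) θ * l θ ω / kap K r ω)
          (Set.uIcc (0:ℝ) (2 * Real.pi)) := by
        intro θ hθ
        rw [hIcc] at hθ
        have hq := (q_pos hθ K r ω).ne'
        have hk := hkne ω hω
        field_simp
      rw [intervalIntegral.integral_congr hEq, intervalIntegral.integral_div, hpl ω hω,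
        zero_div]
    have hsame : ∀ ω ∈ ({-ω₀, ω₀} : Set ℝ),
        (∫ θ in (0:ℝ)..(2 * Real.pi),
          kap K r ω * (prim (fun u => q K r u ω) (fun u => l u ω) θ * q K r θ ω / kap K r ω) *
            prim (fun u => q K r u ω) (fun u => l u ω) θ / (q K r θ ω) ^ 2) =
          ∫ θ in (0:ℝ)..(2 * Real.pi),
            (prim (fun u => q K r u ω) (fun u => l u ω) θ) ^ 2 / q K r θ ω := by
      intro ω hω
      apply intervalIntegral.integral_congr
      intro θ hθ
      rw [hIcc] at hθ
      have hq := (q_pos hθ K r ω).ne'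
      have hk := hkne ω hω
      field_simp
    simp only [Gam, normMuSq]
    rw [hzero1 (-ω₀) hm1, hzero1 ω₀ hm2, hsame (-ω₀) hm1, hsame ω₀ hm2]
    ring
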